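/- An element a ∈ Σ[ρ] satisfies e_prim·a = a (equivalently, a lies in the ideal e_prim·Σ[ρ]) if and only if, for every prime p dividing m, the Σ-algebra homomorphism Σ[ρ] → Σ[ρ/ρ_p] induced by the quotient group homomorphism ρ → ρ/ρ_p sends a to 0. In particular, e_prim is the maximal idempotent of Σ[ρ] whose image under every such quotient map is zero. -/

import Mathlib

open MonoidAlgebra

/-- The averaging element `e_{ρ'} = (1/|ρ'|)·∑_{h ∈ ρ'} h` of the group algebra `Σ[ρ]`
associated to a subgroup `ρ'` of the finite group `ρ`. -/
noncomputable def avgIdem (S : Type*) [CommRing S] {ρ : Type*} [CommGroup ρ] [Fintype ρ]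
    (ρ' : Subgroup ρ) : MonoidAlgebra S ρ :=
  haveI : Fintype ρ' := Fintype.ofFinite ρ'
  Ring.inverse ((Nat.card ρ' : S)) • ∑ h : ρ', MonoidAlgebra.of S ρ (h : ρ)

/-- The primitive idempotent `e_prim = ∏_{p ∣ m prime} (1 − e_{ρ_p})` of the group algebra
`Σ[ρ]` of a cyclic group `ρ` of order `m` with chosen generator `t`; here `ρ_p` is the
unique subgroup of prime order `p`, namely the one generated by `t^(m/p)`. -/
noncomputable def primIdem (S : Type*) [CommRing S] {ρ : Type*} [CommGroup ρ] [Fintype ρ]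
    (m : ℕ) (t : ρ) : MonoidAlgebra S ρ :=
  ∏ p ∈ m.primeFactors, (1 - avgIdem S (Subgroup.zpowers (t ^ (m / p))))

section Aux
variable {S : Type*} [CommRing S] {ρ : Type*} [CommGroup ρ] [Fintype ρ]

lemma avgIdem_def (ρ' : Subgroup ρ) [Fintype ρ'] : avgIdem S ρ' =
    Ring.inverse ((Nat.card ρ' : S)) • ∑ h : ρ', MonoidAlgebra.of S ρ (h : ρ) := by
  unfold avgIdem
  congr!

lemma avgIdem_mul_of {ρ' : Subgroup ρ} {h : ρ} (hh : h ∈ ρ') :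
    avgIdem S ρ' * MonoidAlgebra.of S ρ h = avgIdem S ρ' := by
  classical
  rw [avgIdem_def, smul_mul_assoc, Finset.sum_mul]
  congr 1
  exact Fintype.sum_equiv (Equiv.mulRight (⟨h, hh⟩ : ρ'))
    (fun k : ρ' => MonoidAlgebra.of S ρ ((k : ρ)) * MonoidAlgebra.of S ρ h)
    (fun k : ρ' => MonoidAlgebra.of S ρ (k : ρ)) (fun k => by simp [← map_mul])

lemma avgIdem_mul_single {ρ' : Subgroup ρ} {g g' : ρ} (hgg : g⁻¹ * g' ∈ ρ') :
    avgIdem S ρ' * MonoidAlgebra.of S ρ g = avgIdem S ρ' * MonoidAlgebra.of S ρ g' := by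
  have : g' = g * (g⁻¹ * g') := by group
  rw [this, map_mul, ← mul_assoc, mul_right_comm, avgIdem_mul_of hgg]

lemma mapDomainAlgHom_avgIdem {ρ' : Subgroup ρ} (hN : IsUnit ((Nat.card ρ' : S))) :
    MonoidAlgebra.mapDomainAlgHom S S (QuotientGroup.mk' ρ') (avgIdem S ρ') = 1 := by
  classical
  rw [avgIdem_def, map_smul, map_sum]
  have h1 : ∀ k : ρ', MonoidAlgebra.mapDomainAlgHom S S (QuotientGroup.mk' ρ')
      (MonoidAlgebra.of S ρ (k : ρ)) = 1 := by
    intro k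
    have : (QuotientGroup.mk' ρ') (k : ρ) = 1 := (QuotientGroup.eq_one_iff _).2 k.2
    simp only [mapDomainAlgHom_apply, MonoidAlgebra.of_apply, Finsupp.mapDomain_single, this]
    rw [MonoidAlgebra.mapDomain_single, this, MonoidAlgebra.one_def]
  rw [Finset.sum_congr rfl (fun k _ => h1 k), Finset.sum_const, Finset.card_univ,
    ← Nat.card_eq_fintype_card, ← Nat.cast_smul_eq_nsmul S, smul_smul,
    Ring.inverse_mul_cancel _ hN, one_smul]

lemma avgIdem_idem {ρ' : Subgroup ρ} (hN : IsUnit ((Nat.card ρ' : S))) :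
    IsIdempotentElem (avgIdem S ρ') := by
  classical
  unfold IsIdempotentElem
  nth_rewrite 2 [avgIdem_def]
  rw [mul_smul_comm, Finset.mul_sum,
    Finset.sum_congr rfl (fun k _ => avgIdem_mul_of (S := S) k.2),
    Finset.sum_const, Finset.card_univ, ← Nat.card_eq_fintype_card,
    ← Nat.cast_smul_eq_nsmul S, smul_smul, Ring.inverse_mul_cancel _ hN, one_smul]

omit [Fintype ρ] in
lemma e_mul_eq_zero {ρ' : Subgroup ρ} (e : MonoidAlgebra S ρ) (a : MonoidAlgebra S ρ)
    (hmap : MonoidAlgebra.mapDomainAlgHom S S (QuotientGroup.mk' ρ') a = 0)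
    (hsingle : ∀ {g g' : ρ}, g⁻¹ * g' ∈ ρ' →
      e * MonoidAlgebra.of S ρ g = e * MonoidAlgebra.of S ρ g') :
    e * a = 0 := by
  classical
  set E : ρ ⧸ ρ' → MonoidAlgebra S ρ :=
    Quotient.lift (fun g : ρ => e * MonoidAlgebra.of S ρ g)
      (fun g g' h => hsingle (QuotientGroup.leftRel_apply.mp h)) with hE
  have hEmk : ∀ g : ρ, E (QuotientGroup.mk' ρ' g) = e * MonoidAlgebra.of S ρ g := fun g => rfl
  have key : e * a = (Finsupp.mapDomain (QuotientGroup.mk' ρ') a.coeff).sum (fun q v => v • E q) := by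
    rw [Finsupp.sum_mapDomain_index (by simp) (by intro b m1 m2; rw [add_smul])]
    conv_lhs => rw [← MonoidAlgebra.sum_coeff_single a, Finsupp.mul_sum]
    refine Finsupp.sum_congr fun g _ => ?_
    rw [hEmk, ← mul_one (a.coeff g), ← MonoidAlgebra.smul_single' (a.coeff g) g 1, mul_smul_comm]
    simp [MonoidAlgebra.of_apply]
  rw [key]
  have h0 : Finsupp.mapDomain (QuotientGroup.mk' ρ') a.coeff = 0 := congrArg MonoidAlgebra.coeff hmap
  rw [h0, Finsupp.sum_zero_index]

lemma prod_idem_mul_eq_self_iff {R : Type*} [CommRing R] {ι : Type*} (s : Finset ι)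
    (f : ι → R) (hf : ∀ i ∈ s, IsIdempotentElem (f i)) (a : R) :
    (∏ i ∈ s, f i) * a = a ↔ ∀ i ∈ s, f i * a = a := by
  classical
  constructor
  · intro h i hi
    have : f i * ∏ j ∈ s, f j = ∏ j ∈ s, f j := by
      rw [← Finset.mul_prod_erase s f hi, ← mul_assoc, hf i hi]
    calc f i * a = f i * ((∏ j ∈ s, f j) * a) := by rw [h]
      _ = (f i * ∏ j ∈ s, f j) * a := by ring
      _ = a := by rw [this, h]
  · induction s using Finset.cons_induction with
    | empty => simp
    | cons i s hi ih =>
      intro h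
      rw [Finset.prod_cons, mul_assoc, ih (fun j hj => hf j (Finset.mem_cons_of_mem hj))
        (fun j hj => h j (Finset.mem_cons_of_mem hj)), h i (Finset.mem_cons_self i s)]

end Aux

theorem primIdem_mul_eq_self_iff_quotient_maps_eq_zero
    (S : Type*) [CommRing S] [Nontrivial S] (ρ : Type*) [CommGroup ρ] [Fintype ρ]
    (m : ℕ) (hm : 0 < m) (hcard : Fintype.card ρ = m) (hu : IsUnit (m : S))
    (t : ρ) (ht : ∀ g : ρ, g ∈ Subgroup.zpowers t) :
    (∀ a : MonoidAlgebra S ρ,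
      primIdem S m t * a = a ↔
        ∀ p ∈ m.primeFactors,
          MonoidAlgebra.mapDomainAlgHom S S
            (QuotientGroup.mk' (Subgroup.zpowers (t ^ (m / p)))) a = 0) ∧
    ∀ f : MonoidAlgebra S ρ, IsIdempotentElem f →
      (∀ p ∈ m.primeFactors,
        MonoidAlgebra.mapDomainAlgHom S S
          (QuotientGroup.mk' (Subgroup.zpowers (t ^ (m / p)))) f = 0) →
      primIdem S m t * f = f := by
  have hop : orderOf t = m := by
    rw [orderOf_eq_card_of_forall_mem_zpowers ht, Nat.card_eq_fintype_card, hcard]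
  have hN : ∀ p ∈ m.primeFactors,
      IsUnit ((Nat.card (Subgroup.zpowers (t ^ (m / p))) : S)) := by
    intro p hp
    have hpd : p ∣ m := Nat.dvd_of_mem_primeFactors hp
    have hcardp : Nat.card (Subgroup.zpowers (t ^ (m / p))) = p := by
      rw [Nat.card_zpowers, orderOf_pow, hop,
        Nat.gcd_eq_right (Nat.div_dvd_of_dvd hpd), Nat.div_div_self hpd hm.ne']
    rw [hcardp]
    exact isUnit_of_dvd_unit (Nat.cast_dvd_cast hpd) hu
  have first : ∀ a : MonoidAlgebra S ρ,
      primIdem S m t * a = a ↔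
        ∀ p ∈ m.primeFactors,
          MonoidAlgebra.mapDomainAlgHom S S
            (QuotientGroup.mk' (Subgroup.zpowers (t ^ (m / p)))) a = 0 := by
    intro a
    unfold primIdem
    rw [prod_idem_mul_eq_self_iff _ _ (fun p hp => (avgIdem_idem (hN p hp)).one_sub) a]
    refine forall₂_congr fun p hp => ?_
    rw [one_sub_mul, sub_eq_self]
    constructor
    · intro h
      have := congrArg (MonoidAlgebra.mapDomainAlgHom S S
        (QuotientGroup.mk' (Subgroup.zpowers (t ^ (m / p))))) h
      rwa [map_mul, mapDomainAlgHom_avgIdem (hN p hp), one_mul, map_zero] at this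
    · intro h
      exact e_mul_eq_zero _ a h (fun hgg => avgIdem_mul_single hgg)
  exact ⟨first, fun f _ hf => (first f).2 hf⟩
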